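/- If there exists w ∈ W^P with ℓ(w) = n such that w^{-1} ⋅ (d × μ) is dominant, then 1 − |μ_n| ≤ n + d ≤ |μ_n| − 1. (This is the implication (3) ⇒ (2) of the combinatorial lemma.) -/

import Mathlib

/-- The Weyl group of type `D_N`: pairs `(σ, ε)` of a permutation of `{1, …, N}` and a
sign vector `ε : {1, …, N} → {±1}` with `∏ i, ε i = 1`. -/
def WeylD (N : ℕ) : Type :=
  {w : Equiv.Perm (Fin N) × (Fin N → ℤ) // (∀ i, w.2 i = 1 ∨ w.2 i = -1) ∧ ∏ i, w.2 i = 1}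

namespace WeylD

/-- The `ℤ`-linear action of `w = (σ, ε)` on `ℤ^N`: `(w · λ)_i = ε_i · λ_{σ⁻¹ i}`. -/
def act {N : ℕ} (w : WeylD N) (lam : Fin N → ℤ) : Fin N → ℤ :=
  fun i => w.1.2 i * lam (w.1.1⁻¹ i)

/-- The inverse of a Weyl group element: `(σ, ε)⁻¹ = (σ⁻¹, ε ∘ σ)`. -/
def inv {N : ℕ} (w : WeylD N) : WeylD N :=
  ⟨(w.1.1⁻¹, fun i => w.1.2 (w.1.1 i)), by
    obtain ⟨h1, h2⟩ := w.2
    exact ⟨fun i => h1 _, by rw [Equiv.prod_comp w.1.1 w.1.2]; exact h2⟩⟩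

end WeylD

/-- The positive roots of the root system of type `D_N`:
`{e_i - e_j : i < j} ∪ {e_i + e_j : i < j}`. -/
def PosRootsD (N : ℕ) : Set (Fin N → ℤ) :=
  {α | ∃ i j : Fin N, i < j ∧
    (α = Pi.single i 1 - Pi.single j 1 ∨ α = Pi.single i 1 + Pi.single j 1)}

/-- The length of `w`: the number of positive roots `α` with `w(α) ∈ -Φ⁺`. -/
noncomputable def WeylD.length {N : ℕ} (w : WeylD N) : ℕ :=
  Set.ncard {α | α ∈ PosRootsD N ∧ -(w.act α) ∈ PosRootsD N}

/-- The half sum of positive roots `ρ = (N-1, N-2, …, 1, 0)` of type `D_N`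
(for `N = n+1` this is `(n, n-1, …, 1, 0)`). -/
def rhoD (N : ℕ) : Fin N → ℤ := fun i => (N : ℤ) - 1 - (i : ℕ)

/-- The dot action `w ⋅ λ = w(λ + ρ) - ρ`. -/
def WeylD.dot {N : ℕ} (w : WeylD N) (lam : Fin N → ℤ) : Fin N → ℤ :=
  w.act (lam + rhoD N) - rhoD N

/-- `λ ∈ ℤ^{n+1}` is dominant if `λ_1 ≥ λ_2 ≥ … ≥ λ_n ≥ |λ_{n+1}|`. -/
def DominantD (n : ℕ) (lam : Fin (n + 1) → ℤ) : Prop :=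
  (∀ i j : Fin (n + 1), i ≤ j → (j : ℕ) < n → lam j ≤ lam i) ∧
  (∀ i : Fin (n + 1), (i : ℕ) < n → |lam (Fin.last n)| ≤ lam i)

/-- The set of Kostant representatives `W^P` for the maximal parabolic `P` of
`SO(n+1,n+1)` obtained by deleting the first simple root: those `w` such that
`w⁻¹(α) ∈ Φ⁺` for every positive root `α` supported on the coordinates `{2, …, n+1}`
(i.e. with vanishing first coordinate). -/
def KostantWP (n : ℕ) : Set (WeylD (n + 1)) :=
  {w | ∀ α ∈ PosRootsD (n + 1), α 0 = 0 → w.inv.act α ∈ PosRootsD (n + 1)}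
-- ===== auxiliary lemmas =====
section AuxDR
variable {N : ℕ}

lemma DR_apply_inv_self {α : Type*} (σ : Equiv.Perm α) (x : α) : σ (σ⁻¹ x) = x :=
  Equiv.apply_symm_apply σ x

lemma DR_inv_apply_self {α : Type*} (σ : Equiv.Perm α) (x : α) : σ⁻¹ (σ x) = x :=
  Equiv.symm_apply_apply σ x

lemma DR_act_single (w : WeylD N) (a : Fin N) (c : ℤ) :
    w.act (Pi.single a c) = Pi.single (w.1.1 a) (w.1.2 (w.1.1 a) * c) := by
  funext i
  simp only [WeylD.act, Pi.single_apply]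
  rcases eq_or_ne i (w.1.1 a) with h | h
  · subst h
    simp
  · have h2 : w.1.1⁻¹ i ≠ a := by
      intro hh
      exact h (by rw [← hh, DR_apply_inv_self])
    simp [h]; exact fun h3 => absurd h3 h2

lemma DR_inv_act_single (w : WeylD N) (a : Fin N) (c : ℤ) :
    w.inv.act (Pi.single a c) = Pi.single (w.1.1⁻¹ a) (w.1.2 a * c) := by
  rw [DR_act_single]
  have h1 : w.inv.1.1 = w.1.1⁻¹ := rfl
  rw [h1]
  have h2 : w.inv.1.2 (w.1.1⁻¹ a) = w.1.2 a := by
    show w.1.2 (w.1.1 (w.1.1⁻¹ a)) = w.1.2 a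
    rw [DR_apply_inv_self]
  rw [h2]

lemma DR_act_add (w : WeylD N) (x y : Fin N → ℤ) :
    w.act (x + y) = w.act x + w.act y := by
  funext i; simp [WeylD.act, mul_add]

lemma DR_act_sub (w : WeylD N) (x y : Fin N → ℤ) :
    w.act (x - y) = w.act x - w.act y := by
  funext i; simp [WeylD.act, mul_sub]

lemma DR_mem_sub {a b : Fin N} (hab : a < b) :
    (Pi.single a 1 - Pi.single b 1 : Fin N → ℤ) ∈ PosRootsD N :=
  ⟨a, b, hab, Or.inl rfl⟩

lemma DR_mem_add {a b : Fin N} (hab : a ≠ b) :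
    (Pi.single a 1 + Pi.single b 1 : Fin N → ℤ) ∈ PosRootsD N := by
  rcases hab.lt_or_gt with h | h
  · exact ⟨a, b, h, Or.inr rfl⟩
  · exact ⟨b, a, h, Or.inr (add_comm _ _)⟩

lemma DR_lt_of_sub_mem {a b : Fin N}
    (h : (Pi.single a 1 - Pi.single b 1 : Fin N → ℤ) ∈ PosRootsD N) : a < b := by
  obtain ⟨i, j, hij, h | h⟩ := h
  · have hi := congrFun h i
    have hj := congrFun h j
    simp only [Pi.sub_apply, Pi.single_apply, if_pos rfl] at hi hj
    rw [if_neg hij.ne] at hi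
    rw [if_neg hij.ne'] at hj
    have ha : i = a := by
      rcases eq_or_ne i a with h' | h'
      · exact h'
      · rw [if_neg h'] at hi; split_ifs at hi <;> omega
    have hb : j = b := by
      rcases eq_or_ne j b with h' | h'
      · exact h'
      · rw [if_neg h'] at hj; split_ifs at hj <;> omega
    exact ha ▸ hb ▸ hij
  · exfalso
    have hi := congrFun h i
    have hj := congrFun h j
    simp only [Pi.add_apply, Pi.sub_apply, Pi.single_apply, if_pos rfl] at hi hj
    rw [if_neg hij.ne] at hi
    rw [if_neg hij.ne'] at hj
    have ha : i = a := by
      rcases eq_or_ne i a with h' | h'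
      · exact h'
      · rw [if_neg h'] at hi; split_ifs at hi <;> omega
    have hb : j = a := by
      rcases eq_or_ne j a with h' | h'
      · exact h'
      · rw [if_neg h'] at hj; split_ifs at hj <;> omega
    exact hij.ne (ha.trans hb.symm)

lemma DR_not_mem_negadd (a b : Fin N) :
    (-Pi.single a 1 - Pi.single b 1 : Fin N → ℤ) ∉ PosRootsD N := by
  rintro ⟨i, j, hij, h | h⟩
  · have hi := congrFun h i
    simp only [Pi.sub_apply, Pi.neg_apply, Pi.single_apply, if_pos rfl] at hi
    rw [if_neg hij.ne] at hi
    split_ifs at hi <;> omega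
  · have hi := congrFun h i
    simp only [Pi.sub_apply, Pi.add_apply, Pi.neg_apply, Pi.single_apply, if_pos rfl] at hi
    rw [if_neg hij.ne] at hi
    split_ifs at hi <;> omega

lemma DR_posRootsD_finite : (PosRootsD N).Finite := by
  apply Set.Finite.subset (Set.finite_range
    (fun p : Fin N × Fin N × Bool =>
      if p.2.2 then (Pi.single p.1 1 - Pi.single p.2.1 1 : Fin N → ℤ)
      else Pi.single p.1 1 + Pi.single p.2.1 1))
  rintro α ⟨i, j, hij, h | h⟩
  · exact ⟨(i, j, true), h.symm⟩
  · exact ⟨(i, j, false), h.symm⟩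

lemma DR_single_injective {a b : Fin N} (h : (Pi.single a 1 : Fin N → ℤ) = Pi.single b 1) :
    a = b := by
  have := congrFun h a
  simp only [Pi.single_apply, if_pos rfl] at this
  by_contra hc
  simp [hc] at this

end AuxDR

lemma DR_cons_last {n : ℕ} (d : ℤ) (μ : Fin n → ℤ) (q : Fin n) (hq : (q : ℕ) = n - 1)
    (hn : 1 ≤ n) : (Fin.cons d μ : Fin (n + 1) → ℤ) (Fin.last n) = μ q := by
  have hsucc : Fin.last n = Fin.succ q := by
    apply Fin.ext
    simp [Fin.val_last, hq]
    omega
  rw [hsucc, Fin.cons_succ]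


set_option maxHeartbeats 1000000 in
/-- Implication (3) ⇒ (2) of the combinatorial lemma: if some Kostant representative
`w ∈ W^P` of length `n = dim(N_P)/2` makes `w⁻¹ ⋅ (d × μ)` dominant, then
`1 - |μ_n| ≤ n + d ≤ |μ_n| - 1`. -/
theorem kostant_implies_range (n : ℕ) (hn : 2 ≤ n) (hneven : Even n)
    (μ : Fin n → ℤ)
    (hdec : ∀ i j : Fin n, i ≤ j → (j : ℕ) + 1 < n → μ j ≤ μ i)
    (hlast : ∀ i : Fin n, (i : ℕ) + 1 < n → |μ ⟨n - 1, by omega⟩| ≤ μ i)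
    (d : ℤ)
    (hw : ∃ w : WeylD (n + 1), w ∈ KostantWP n ∧ w.length = n ∧
      DominantD n (w.inv.dot (Fin.cons d μ))) :
    1 - |μ ⟨n - 1, by omega⟩| ≤ (n : ℤ) + d ∧
      (n : ℤ) + d ≤ |μ ⟨n - 1, by omega⟩| - 1 := by
  obtain ⟨w, hK, hlen, hdom⟩ := hw
  have hsgn := w.2.1
  have hlast0 : (0 : Fin (n + 1)) ≠ Fin.last n := by
    intro h
    have := congrArg Fin.val h
    simp [Fin.val_last] at this
    omega
  -- the two Kostant membership facts for positive labels i < j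
  have key : ∀ i j : Fin (n + 1), 0 < i → i < j →
      (Pi.single (w.1.1⁻¹ i) (w.1.2 i) - Pi.single (w.1.1⁻¹ j) (w.1.2 j)
        ∈ PosRootsD (n + 1)) ∧
      (Pi.single (w.1.1⁻¹ i) (w.1.2 i) + Pi.single (w.1.1⁻¹ j) (w.1.2 j)
        ∈ PosRootsD (n + 1)) := by
    intro i j hi hij
    have hj : 0 < j := hi.trans hij
    have h0sub : (Pi.single i 1 - Pi.single j 1 : Fin (n + 1) → ℤ) 0 = 0 := by
      simp [Pi.single_apply, hi.ne, hj.ne]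
    have h0add : (Pi.single i 1 + Pi.single j 1 : Fin (n + 1) → ℤ) 0 = 0 := by
      simp [Pi.single_apply, hi.ne, hj.ne]
    have h1 := hK _ (DR_mem_sub hij) h0sub
    have h2 := hK _ (DR_mem_add hij.ne) h0add
    rw [DR_act_sub, DR_inv_act_single, DR_inv_act_single, mul_one, mul_one] at h1
    rw [DR_act_add, DR_inv_act_single, DR_inv_act_single, mul_one, mul_one] at h2
    exact ⟨h1, h2⟩
  -- middle signs are +1
  have hone : ∀ i : Fin (n + 1), 0 < i → i < Fin.last n → w.1.2 i = 1 := by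
    intro i hi hilast
    rcases hsgn i with h | h
    · exact h
    exfalso
    obtain ⟨h1, h2⟩ := key i (Fin.last n) hi hilast
    rw [h, Pi.single_neg] at h1 h2
    rcases hsgn (Fin.last n) with h' | h'
    · rw [h'] at h1
      exact DR_not_mem_negadd _ _ h1
    · rw [h', Pi.single_neg, ← sub_eq_add_neg] at h2
      exact DR_not_mem_negadd _ _ h2
  -- monotonicity of the inverse on positive labels
  have hmono : ∀ i j : Fin (n + 1), 0 < i → i < j → w.1.1⁻¹ i < w.1.1⁻¹ j := by
    intro i j hi hij
    obtain ⟨h1, h2⟩ := key i j hi hij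
    rw [hone i hi (hij.trans_le (Fin.le_last j))] at h1 h2
    rcases hsgn j with h' | h'
    · rw [h'] at h1
      exact DR_lt_of_sub_mem h1
    · rw [h', Pi.single_neg, ← sub_eq_add_neg] at h2
      exact DR_lt_of_sub_mem h2
  -- the first and last signs agree
  have hprodpair : w.1.2 0 * w.1.2 (Fin.last n) = 1 := by
    have hp := w.2.2
    have heq : ∏ i, w.1.2 i = ∏ i ∈ ({0, Fin.last n} : Finset (Fin (n + 1))), w.1.2 i := by
      symm
      apply Finset.prod_subset (Finset.subset_univ _)
      intro x _ hx
      simp only [Finset.mem_insert, Finset.mem_singleton, not_or] at hx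
      exact hone x (Fin.pos_of_ne_zero hx.1) (lt_of_le_of_ne (Fin.le_last x) hx.2)
    rw [heq, Finset.prod_pair hlast0] at hp
    exact hp
  have h0last : w.1.2 0 = w.1.2 (Fin.last n) := by
    rcases hsgn 0 with h | h <;> rcases hsgn (Fin.last n) with h' | h' <;>
      rw [h, h'] at hprodpair ⊢ <;> norm_num at hprodpair
  -- σ⁻¹ 0 must be the last index
  have hklast : w.1.1⁻¹ 0 = Fin.last n := by
    by_contra hk
    have hkltn : w.1.1⁻¹ 0 < Fin.last n := lt_of_le_of_ne (Fin.le_last _) hk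
    rcases hsgn (Fin.last n) with hs | hs
    · -- all signs +1 : length ≤ n - 1
      have hall : ∀ p, w.1.2 p = 1 := by
        intro p
        rcases eq_or_ne p 0 with rfl | hp0
        · rw [h0last]; exact hs
        rcases eq_or_ne p (Fin.last n) with rfl | hpl
        · exact hs
        · exact hone p (Fin.pos_of_ne_zero hp0) (lt_of_le_of_ne (Fin.le_last _) hpl)
      have hsub : {α | α ∈ PosRootsD (n + 1) ∧ -(w.act α) ∈ PosRootsD (n + 1)} ⊆
          (fun a => (Pi.single a 1 - Pi.single (w.1.1⁻¹ 0) 1 : Fin (n + 1) → ℤ)) ''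
            ({w.1.1⁻¹ 0, Fin.last n}ᶜ : Set (Fin (n + 1))) := by
        rintro α ⟨⟨i, j, hij, hα | hα⟩, hneg⟩
        · subst hα
          rw [DR_act_sub, DR_act_single, DR_act_single, mul_one, mul_one, hall, hall,
            neg_sub] at hneg
          have hlt : w.1.1 j < w.1.1 i := DR_lt_of_sub_mem hneg
          have hj0 : w.1.1 j = 0 := by
            by_contra hj0
            have := hmono (w.1.1 j) (w.1.1 i) (Fin.pos_of_ne_zero hj0) hlt
            simp only [DR_inv_apply_self] at this
            exact absurd (hij.trans this) (lt_irrefl _)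
          have hjk : j = w.1.1⁻¹ 0 := by rw [← hj0, DR_inv_apply_self]
          refine ⟨i, ?_, by rw [hjk]⟩
          simp only [Set.mem_compl_iff, Set.mem_insert_iff, Set.mem_singleton_iff, not_or]
          exact ⟨by rw [← hjk]; exact hij.ne, (hij.trans_le (Fin.le_last j)).ne⟩
        · exfalso
          subst hα
          rw [DR_act_add, DR_act_single, DR_act_single, mul_one, mul_one, hall, hall,
            neg_add, ← sub_eq_add_neg] at hneg
          exact DR_not_mem_negadd _ _ hneg
      have h1 : w.length ≤
          ((fun a => (Pi.single a 1 - Pi.single (w.1.1⁻¹ 0) 1 : Fin (n + 1) → ℤ)) ''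
            ({w.1.1⁻¹ 0, Fin.last n}ᶜ : Set (Fin (n + 1)))).ncard :=
        Set.ncard_le_ncard hsub (Set.Finite.image _ (Set.toFinite _))
      have h2 : ((fun a => (Pi.single a 1 - Pi.single (w.1.1⁻¹ 0) 1 : Fin (n + 1) → ℤ)) ''
            ({w.1.1⁻¹ 0, Fin.last n}ᶜ : Set (Fin (n + 1)))).ncard ≤
          (({w.1.1⁻¹ 0, Fin.last n}ᶜ : Set (Fin (n + 1)))).ncard :=
        Set.ncard_image_le (Set.toFinite _)
      have h3 := Set.ncard_add_ncard_compl ({w.1.1⁻¹ 0, Fin.last n} : Set (Fin (n + 1)))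
      rw [Set.ncard_pair hk, Nat.card_eq_fintype_card, Fintype.card_fin] at h3
      omega
    · -- last sign -1 : length ≥ n + 1
      have hε0 : w.1.2 0 = -1 := by rw [h0last, hs]
      have hwk : w.act (Pi.single (w.1.1⁻¹ 0) 1) = -Pi.single 0 1 := by
        rw [DR_act_single, DR_apply_inv_self, hε0, neg_one_mul, Pi.single_neg]
      have hwm : w.act (Pi.single (w.1.1⁻¹ (Fin.last n)) 1) = -Pi.single (Fin.last n) 1 := by
        rw [DR_act_single, DR_apply_inv_self, hs, neg_one_mul, Pi.single_neg]
      have hσne : ∀ b : Fin (n + 1), b ≠ w.1.1⁻¹ 0 → w.1.1 b ≠ 0 := by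
        intro b hb h
        exact hb (by rw [← h, DR_inv_apply_self])
      -- all the sums e_k + e_b are inversions
      have himg : ∀ b : Fin (n + 1), b ≠ w.1.1⁻¹ 0 →
          (Pi.single (w.1.1⁻¹ 0) 1 + Pi.single b 1 : Fin (n + 1) → ℤ) ∈
            {α | α ∈ PosRootsD (n + 1) ∧ -(w.act α) ∈ PosRootsD (n + 1)} := by
        intro b hb
        refine ⟨DR_mem_add (Ne.symm hb), ?_⟩
        rw [DR_act_add, hwk, DR_act_single, mul_one]
        have hb0 : 0 < w.1.1 b := Fin.pos_of_ne_zero (hσne b hb)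
        rcases hsgn (w.1.1 b) with h' | h'
        · rw [h', neg_add, neg_neg, ← sub_eq_add_neg]
          exact DR_mem_sub hb0
        · rw [h', Pi.single_neg, neg_add, neg_neg, neg_neg]
          exact DR_mem_add hb0.ne
      -- an extra inversion
      have hmkne : w.1.1⁻¹ (Fin.last n) ≠ w.1.1⁻¹ 0 := by
        intro h
        exact hlast0 ((w.1.1⁻¹).injective h).symm
      have hextra : ∃ x₀ : Fin (n + 1) → ℤ,
          x₀ ∈ {α | α ∈ PosRootsD (n + 1) ∧ -(w.act α) ∈ PosRootsD (n + 1)} ∧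
          x₀ ∉ (fun b => (Pi.single (w.1.1⁻¹ 0) 1 + Pi.single b 1 : Fin (n + 1) → ℤ)) ''
            ({w.1.1⁻¹ 0}ᶜ : Set (Fin (n + 1))) := by
        have hnotimg : ∀ y : Fin (n + 1), y ≠ w.1.1⁻¹ 0 →
            (Pi.single (w.1.1⁻¹ 0) 1 - Pi.single y 1 : Fin (n + 1) → ℤ) ∉
              (fun b => (Pi.single (w.1.1⁻¹ 0) 1 + Pi.single b 1 : Fin (n + 1) → ℤ)) ''
                ({w.1.1⁻¹ 0}ᶜ : Set (Fin (n + 1))) := by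
          rintro y hy ⟨b, hb, heq⟩
          have hyy := congrFun heq y
          simp only [Pi.sub_apply, Pi.add_apply, Pi.single_apply, if_neg hy,
            eq_self_iff_true, if_true] at hyy
          split_ifs at hyy <;> omega
        rcases hmkne.lt_or_gt with hmlt | hklt
        · -- m < k : extra root e_k - e_last
          have hlne : Fin.last n ≠ w.1.1⁻¹ 0 := Ne.symm hk
          refine ⟨Pi.single (w.1.1⁻¹ 0) 1 - Pi.single (Fin.last n) 1,
            ⟨DR_mem_sub hkltn, ?_⟩, hnotimg _ hlne⟩
          rw [DR_act_sub, hwk, DR_act_single, mul_one]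
          have hσl0 : 0 < w.1.1 (Fin.last n) := Fin.pos_of_ne_zero (hσne _ hlne)
          rcases hsgn (w.1.1 (Fin.last n)) with h' | h'
          · rw [h', neg_sub, sub_neg_eq_add]
            exact DR_mem_add (hσne _ hlne)
          · rw [h', Pi.single_neg]
            have heq2 : -(-Pi.single 0 1 - -Pi.single (w.1.1 (Fin.last n)) 1) =
                (Pi.single 0 1 - Pi.single (w.1.1 (Fin.last n)) 1 : Fin (n + 1) → ℤ) := by
              abel
            rw [heq2]
            exact DR_mem_sub hσl0
        · -- k < m : extra root e_k - e_m
          refine ⟨Pi.single (w.1.1⁻¹ 0) 1 - Pi.single (w.1.1⁻¹ (Fin.last n)) 1,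
            ⟨DR_mem_sub hklt, ?_⟩, hnotimg _ hmkne⟩
          rw [DR_act_sub, hwk, hwm]
          have heq : -(-Pi.single 0 1 - -Pi.single (Fin.last n) 1) =
              (Pi.single 0 1 - Pi.single (Fin.last n) 1 : Fin (n + 1) → ℤ) := by abel
          rw [heq]
          exact DR_mem_sub (Fin.pos_of_ne_zero (Ne.symm hlast0))
      obtain ⟨x₀, hx₀inv, hx₀img⟩ := hextra
      -- counting
      have hc1 : (({w.1.1⁻¹ 0}ᶜ : Set (Fin (n + 1)))).ncard = n := by
        have h3 := Set.ncard_add_ncard_compl ({w.1.1⁻¹ 0} : Set (Fin (n + 1)))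
        rw [Set.ncard_singleton, Nat.card_eq_fintype_card, Fintype.card_fin] at h3
        omega
      have hinj : Function.Injective
          (fun b => (Pi.single (w.1.1⁻¹ 0) 1 + Pi.single b 1 : Fin (n + 1) → ℤ)) := by
        intro a b h
        exact DR_single_injective (add_left_cancel h)
      have hc2 : ((fun b => (Pi.single (w.1.1⁻¹ 0) 1 + Pi.single b 1 : Fin (n + 1) → ℤ)) ''
          ({w.1.1⁻¹ 0}ᶜ : Set (Fin (n + 1)))).ncard = n := by
        rw [Set.ncard_image_of_injective _ hinj, hc1]
      have hc3 : (insert x₀ ((fun b => (Pi.single (w.1.1⁻¹ 0) 1 + Pi.single b 1 : Fin (n + 1) → ℤ)) ''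
          ({w.1.1⁻¹ 0}ᶜ : Set (Fin (n + 1))))).ncard = n + 1 := by
        rw [Set.ncard_insert_of_notMem hx₀img (Set.Finite.image _ (Set.toFinite _)), hc2]
      have hsub : insert x₀ ((fun b => (Pi.single (w.1.1⁻¹ 0) 1 + Pi.single b 1 : Fin (n + 1) → ℤ)) ''
          ({w.1.1⁻¹ 0}ᶜ : Set (Fin (n + 1)))) ⊆
          {α | α ∈ PosRootsD (n + 1) ∧ -(w.act α) ∈ PosRootsD (n + 1)} := by
        rintro α (rfl | ⟨b, hb, rfl⟩)
        · exact hx₀inv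
        · exact himg b hb
      have hfin : {α | α ∈ PosRootsD (n + 1) ∧ -(w.act α) ∈ PosRootsD (n + 1)}.Finite :=
        DR_posRootsD_finite.subset (fun α hα => hα.1)
      have hge := Set.ncard_le_ncard hsub hfin
      unfold WeylD.length at hlen
      omega
  -- the value of σ⁻¹ at the last label is n-1
  have hchain : ∀ m : ℕ, ∀ (hm : m ≤ n) (h1 : 1 ≤ m),
      m - 1 ≤ ((w.1.1⁻¹ (⟨m, by omega⟩ : Fin (n + 1))) : ℕ) := by
    intro m
    induction m with
    | zero => intro _ h; exact absurd h (by omega)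
    | succ p ih =>
      intro hm h1
      by_cases hp : p = 0
      · omega
      · have hlt : w.1.1⁻¹ (⟨p, by omega⟩ : Fin (n + 1)) <
            w.1.1⁻¹ (⟨p + 1, by omega⟩ : Fin (n + 1)) := by
          apply hmono
          · rw [Fin.lt_def]
            show 0 < p
            omega
          · rw [Fin.lt_def]
            show p < p + 1
            omega
        have h2 := ih (by omega) (by omega)
        have h3 : ((w.1.1⁻¹ (⟨p, by omega⟩ : Fin (n + 1))) : ℕ) <
            ((w.1.1⁻¹ (⟨p + 1, by omega⟩ : Fin (n + 1))) : ℕ) := hlt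
        omega
  have hm1 : (n : ℕ) - 1 ≤ ((w.1.1⁻¹ (Fin.last n)) : ℕ) := hchain n le_rfl (by omega)
  have hm2 : w.1.1⁻¹ (Fin.last n) ≠ Fin.last n := by
    intro h
    exact hlast0 ((w.1.1⁻¹).injective (h.trans hklast.symm)).symm
  have hm3 : ((w.1.1⁻¹ (Fin.last n)) : ℕ) ≤ n := Nat.lt_succ_iff.mp (Fin.is_lt _)
  have hm4 : ((w.1.1⁻¹ (Fin.last n)) : ℕ) ≠ n := by
    intro hh
    exact hm2 (Fin.ext (by rw [hh, Fin.val_last]))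
  have hσlastval : ((w.1.1⁻¹ (Fin.last n)) : ℕ) = n - 1 := by omega
  have hn1 : n - 1 < n + 1 := by omega
  have hn2 : n - 1 < n := by omega
  -- the action of w⁻¹, pointwise
  have hactfun : ∀ ν : Fin (n + 1) → ℤ, ∀ x, w.inv.act ν x = w.1.2 (w.1.1 x) * ν (w.1.1 x) := by
    intro ν x
    show w.inv.1.2 x * ν (w.inv.1.1⁻¹ x) = _
    have e1 : w.inv.1.1 = w.1.1⁻¹ := rfl
    have e2 : w.inv.1.2 x = w.1.2 (w.1.1 x) := rfl
    rw [e1, e2, inv_inv]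
  have hσlast0 : w.1.1 (Fin.last n) = 0 := by rw [← hklast, DR_apply_inv_self]
  have hσp1 : w.1.1 (⟨n - 1, hn1⟩ : Fin (n + 1)) = Fin.last n := by
    have he : (⟨n - 1, hn1⟩ : Fin (n + 1)) = w.1.1⁻¹ (Fin.last n) :=
      (Fin.ext hσlastval).symm
    rw [he, DR_apply_inv_self]
  -- evaluate the dot action at the two relevant spots
  have hvallast : w.inv.dot (Fin.cons d μ) (Fin.last n) = w.1.2 0 * ((n : ℤ) + d) := by
    show w.inv.act (Fin.cons d μ + rhoD (n + 1)) (Fin.last n) - rhoD (n + 1) (Fin.last n) = _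
    rw [hactfun, hσlast0]
    simp only [Pi.add_apply, Fin.cons_zero, rhoD, Fin.val_zero, Fin.val_last]
    push_cast
    ring
  have hvalp1 : w.inv.dot (Fin.cons d μ) (⟨n - 1, hn1⟩ : Fin (n + 1)) =
      w.1.2 (Fin.last n) * μ ⟨n - 1, hn2⟩ - 1 := by
    show w.inv.act (Fin.cons d μ + rhoD (n + 1)) (⟨n - 1, hn1⟩ : Fin (n + 1)) -
      rhoD (n + 1) (⟨n - 1, hn1⟩ : Fin (n + 1)) = _
    rw [hactfun, hσp1]
    rw [Pi.add_apply, DR_cons_last d μ ⟨n - 1, hn2⟩ rfl (by omega)]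
    have hr1 : rhoD (n + 1) (Fin.last n) = 0 := by
      simp [rhoD, Fin.val_last]
    have hr2 : rhoD (n + 1) (⟨n - 1, hn1⟩ : Fin (n + 1)) = 1 := by
      show ((n + 1 : ℕ) : ℤ) - 1 - ((n - 1 : ℕ) : ℤ) = 1
      rw [Nat.cast_sub (by omega : 1 ≤ n)]
      push_cast
      ring
    simp only [hr1, hr2]
    ring
  have hD := hdom.2 (⟨n - 1, hn1⟩ : Fin (n + 1)) hn2
  simp only [hvallast, hvalp1] at hD
  have e1 : |w.1.2 0 * ((n : ℤ) + d)| = |(n : ℤ) + d| := by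
    rcases hsgn 0 with h0 | h0 <;> rw [h0]
    · rw [one_mul]
    · rw [neg_one_mul, abs_neg]
  have e2 : w.1.2 (Fin.last n) * μ ⟨n - 1, hn2⟩ ≤ |μ ⟨n - 1, hn2⟩| := by
    rcases hsgn (Fin.last n) with hl | hl <;> rw [hl]
    · rw [one_mul]; exact le_abs_self _
    · rw [neg_one_mul]; exact neg_le_abs _
  simp only [e1] at hD
  have habs : |(n : ℤ) + d| ≤ |μ ⟨n - 1, hn2⟩| - 1 := by linarith
  have hfin2 := abs_le.mp habs
  exact ⟨by linarith [hfin2.1], by linarith [hfin2.2]⟩
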